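/- Let ℋ be a complex Hilbert space and let h_{v,x} ∈ ℋ (v, x ∈ {1,…,n}) satisfy: ⟨h_{v,x}, h_{v,y}⟩ = 0 for x ≠ y; Σ_x h_{v,x} = Σ_x h_{w,x} for all v, w; ‖Σ_x h_{v,x}‖ = 1; and ⟨h_{v,x}, h_{w,y}⟩ ≥ 0 for all v, w, x, y. Set p(x,y|v,w) = ⟨h_{v,x}, h_{w,y}⟩, let φ_p : M_n(ℂ) → M_n(ℂ) be the linear map with φ_p(A)_{x,y} = Σ_{v,w} p(x,y|v,w) A_{v,w}, let glim be a Banach generalized limit, and define ψ_p : M_n(ℂ) → M_n(ℂ) by ψ_p(A)_{x,y} = glim(k ↦ (φ_p^k(A))_{x,y}). Then ψ_p is completely positive; in particular its Choi matrix C ∈ M_{n²}(ℂ), indexed by pairs, with entries C_{(v,x),(w,y)} = (ψ_p(E_{v,w}))_{x,y}, is positive semidefinite, and ψ_p maps positive semidefinite matrices to positive semidefinite matrices. -/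

import Mathlib

open scoped InnerProductSpace ComplexOrder

/-- A Banach generalized limit: a `ℂ`-linear functional on the space of complex
sequences that agrees with the limit on convergent sequences, is nonnegative on bounded
nonnegative sequences, and is shift-invariant on bounded sequences. -/
def IsBanachLimit (glim : (ℕ → ℂ) →ₗ[ℂ] ℂ) : Prop :=
  (∀ (a : ℕ → ℂ) (L : ℂ), Filter.Tendsto a Filter.atTop (nhds L) → glim a = L) ∧
  (∀ a : ℕ → ℂ, (∃ C : ℝ, ∀ k, ‖a k‖ ≤ C) → (∀ k, 0 ≤ a k) → 0 ≤ glim a) ∧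
  (∀ a : ℕ → ℂ, (∃ C : ℝ, ∀ k, ‖a k‖ ≤ C) → glim (fun k => a (k + 1)) = glim a)

/-- The map `φ_p(A)_{x,y} = Σ_{v,w} p(x,y|v,w) A_{v,w}` for a complex family `p`. -/
noncomputable def phiMap {n : ℕ} (p : Fin n → Fin n → Fin n → Fin n → ℂ)
    (A : Matrix (Fin n) (Fin n) ℂ) : Matrix (Fin n) (Fin n) ℂ :=
  Matrix.of fun x y => ∑ v, ∑ w, p x y v w * A v w

/-- The map `ψ_p(A)_{x,y} = glim (k ↦ (φ_p^k(A))_{x,y})`. -/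
noncomputable def psiMap {n : ℕ} (glim : (ℕ → ℂ) →ₗ[ℂ] ℂ)
    (p : Fin n → Fin n → Fin n → Fin n → ℂ)
    (A : Matrix (Fin n) (Fin n) ℂ) : Matrix (Fin n) (Fin n) ℂ :=
  Matrix.of fun x y => glim (fun k => ((phiMap p)^[k] A) x y)

section Aux

open Finset Matrix

lemma auxSumRot {α β γ M : Type*} [Fintype α] [Fintype β] [Fintype γ] [AddCommMonoid M]
    (f : α → β → γ → M) :
    ∑ x, ∑ y, ∑ j, f x y j = ∑ j, ∑ x, ∑ y, f x y j := by
  calc ∑ x, ∑ y, ∑ j, f x y j = ∑ x, ∑ j, ∑ y, f x y j :=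
        Finset.sum_congr rfl fun x _ => Finset.sum_comm
    _ = ∑ j, ∑ x, ∑ y, f x y j := Finset.sum_comm

lemma auxSumSwap4 {α β γ δ M : Type*} [Fintype α] [Fintype β] [Fintype γ] [Fintype δ]
    [AddCommMonoid M] (f : α → β → γ → δ → M) :
    ∑ x, ∑ y, ∑ a, ∑ b, f x y a b = ∑ a, ∑ b, ∑ x, ∑ y, f x y a b := by
  calc ∑ x, ∑ y, ∑ a, ∑ b, f x y a b = ∑ a, ∑ x, ∑ y, ∑ b, f x y a b := auxSumRot _
    _ = ∑ a, ∑ b, ∑ x, ∑ y, f x y a b := Finset.sum_congr rfl fun a _ => auxSumRot _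

variable {H : Type} [NormedAddCommGroup H] [InnerProductSpace ℂ H]

lemma auxQuadEqInner {ι : Type*} [Fintype ι] (v : ι → H) (x : ι → ℂ) :
    (star x) ⬝ᵥ ((Matrix.of fun i j => ⟪v i, v j⟫_ℂ) *ᵥ x)
      = ⟪∑ i, x i • v i, ∑ j, x j • v j⟫_ℂ := by
  simp only [dotProduct, Matrix.mulVec, Matrix.of_apply, Pi.star_apply,
    sum_inner, inner_sum, inner_smul_left, inner_smul_right, Finset.mul_sum]
  rw [Finset.sum_comm]
  refine Finset.sum_congr rfl fun i _ => Finset.sum_congr rfl fun j _ => ?_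
  simp only [Complex.star_def]
  ring

lemma auxGramPosSemidef {ι : Type*} [Fintype ι] [DecidableEq ι] (v : ι → H) :
    (Matrix.of fun i j => ⟪v i, v j⟫_ℂ).PosSemidef := by
  refine Matrix.PosSemidef.of_dotProduct_mulVec_nonneg ?_ ?_
  · ext i j
    simp [Matrix.conjTranspose_apply, inner_conj_symm]
  · intro x
    rw [auxQuadEqInner, inner_self_eq_norm_sq_to_K]
    positivity

lemma auxPosSemidefOfDotProduct {m : Type*} [Fintype m] [DecidableEq m] (M : Matrix m m ℂ)
    (hM : ∀ x : m → ℂ, 0 ≤ star x ⬝ᵥ (M *ᵥ x)) : M.PosSemidef := by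
  have hconj : ∀ x : m → ℂ, (starRingEnd ℂ) (star x ⬝ᵥ (M *ᵥ x)) = star x ⬝ᵥ (M *ᵥ x) := by
    intro x
    have h0 := hM x
    rw [Complex.le_def] at h0
    rw [Complex.conj_eq_iff_im]
    simpa using h0.2.symm
  have key : ∀ x y : m → ℂ, (starRingEnd ℂ) (star y ⬝ᵥ (M *ᵥ x)) = star x ⬝ᵥ (M *ᵥ y) := by
    intro x y
    have h1 : star (x + y) ⬝ᵥ (M *ᵥ (x + y)) =
        star x ⬝ᵥ (M *ᵥ x) + (star x ⬝ᵥ (M *ᵥ y)) + (star y ⬝ᵥ (M *ᵥ x)) + star y ⬝ᵥ (M *ᵥ y) := by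
      simp only [star_add, add_dotProduct, Matrix.mulVec_add, dotProduct_add]
      ring
    have h2 : star (x + Complex.I • y) ⬝ᵥ (M *ᵥ (x + Complex.I • y)) =
        star x ⬝ᵥ (M *ᵥ x) + Complex.I * (star x ⬝ᵥ (M *ᵥ y))
          - Complex.I * (star y ⬝ᵥ (M *ᵥ x)) + star y ⬝ᵥ (M *ᵥ y) := by
      simp only [star_add, star_smul, add_dotProduct, smul_dotProduct, Matrix.mulVec_add,
        Matrix.mulVec_smul, dotProduct_add, dotProduct_smul, Complex.conj_I, smul_eq_mul,
        neg_smul, neg_dotProduct, neg_mul, mul_neg, Complex.star_def]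
      linear_combination (-(star y ⬝ᵥ (M *ᵥ y))) * Complex.I_sq
    have h1' := congrArg (starRingEnd ℂ) h1
    have h2' := congrArg (starRingEnd ℂ) h2
    simp only [map_add, map_sub, _root_.map_mul, Complex.conj_I, hconj] at h1' h2'
    rw [h1] at h1'
    rw [h2] at h2'
    linear_combination (-(1:ℂ)/2) * h1' + (Complex.I/2) * h2' +
      (((starRingEnd ℂ) (star y ⬝ᵥ (M *ᵥ x)) - (starRingEnd ℂ) (star x ⬝ᵥ (M *ᵥ y))
        - star x ⬝ᵥ (M *ᵥ y) + star y ⬝ᵥ (M *ᵥ x))/2) * Complex.I_sq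
  refine Matrix.PosSemidef.of_dotProduct_mulVec_nonneg ?_ hM
  ext i j
  rw [Matrix.conjTranspose_apply]
  have hB : ∀ a b : m,
      (star ((Pi.single a (1:ℂ) : m → ℂ))) ⬝ᵥ (M *ᵥ (Pi.single b 1 : m → ℂ)) = M a b := by
    intro a b
    simp [Matrix.mulVec_single, dotProduct, Pi.single_apply, apply_ite]
  rw [Complex.star_def, ← hB i j, ← hB j i]
  exact key _ _

lemma auxSumPsd {ι : Type*} {m : Type*} [Fintype m] [DecidableEq m] (s : Finset ι)
    (f : ι → Matrix m m ℂ) (hf : ∀ i ∈ s, (f i).PosSemidef) :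
    (∑ i ∈ s, f i).PosSemidef := by
  classical
  induction s using Finset.induction with
  | empty => simpa using Matrix.PosSemidef.zero
  | @insert a s ha ih =>
    rw [Finset.sum_insert ha]
    exact (hf a (Finset.mem_insert_self a s)).add
      (ih fun i hi => hf i (Finset.mem_insert_of_mem hi))

lemma auxPsdFactor {m : Type*} [Fintype m] [DecidableEq m] {A : Matrix m m ℂ}
    (hA : A.PosSemidef) : ∃ B : Matrix m m ℂ, A = Bᴴ * B := by
  open scoped MatrixOrder in
  obtain ⟨B, hB⟩ := CStarAlgebra.nonneg_iff_eq_star_mul_self.mp hA.nonneg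
  exact ⟨B, hB⟩

lemma auxGlimDot {m : Type*} [Fintype m] (glim : (ℕ → ℂ) →ₗ[ℂ] ℂ)
    (M : ℕ → Matrix m m ℂ) (x : m → ℂ) :
    star x ⬝ᵥ ((Matrix.of fun i j => glim fun k => M k i j) *ᵥ x)
      = glim (fun k => star x ⬝ᵥ (M k *ᵥ x)) := by
  have hfun : (fun k => star x ⬝ᵥ (M k *ᵥ x))
      = ∑ i, ∑ j, ((starRingEnd ℂ) (x i) * x j) • (fun k => M k i j) := by
    funext k
    simp only [Finset.sum_apply, Pi.smul_apply, smul_eq_mul, dotProduct, mulVec,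
      Pi.star_apply, Complex.star_def, Finset.mul_sum]
    exact Finset.sum_congr rfl fun i _ => Finset.sum_congr rfl fun j _ => by ring
  rw [hfun, map_sum]
  simp only [map_sum, LinearMap.map_smul, smul_eq_mul]
  simp only [dotProduct, mulVec, Matrix.of_apply, Pi.star_apply, Complex.star_def,
    Finset.mul_sum]
  exact Finset.sum_congr rfl fun i _ => Finset.sum_congr rfl fun j _ => by ring

lemma auxGlimPsd {m : Type*} [Fintype m] [DecidableEq m] (glim : (ℕ → ℂ) →ₗ[ℂ] ℂ)
    (hglim : IsBanachLimit glim) (M : ℕ → Matrix m m ℂ)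
    (hpsd : ∀ k, (M k).PosSemidef) (C : ℝ) (hbd : ∀ k i j, ‖M k i j‖ ≤ C) :
    (Matrix.of fun i j => glim fun k => M k i j).PosSemidef := by
  apply auxPosSemidefOfDotProduct
  intro x
  rw [auxGlimDot]
  apply hglim.2.1
  · refine ⟨∑ i, ‖x i‖ * (∑ j, C * ‖x j‖), fun k => ?_⟩
    calc ‖star x ⬝ᵥ (M k *ᵥ x)‖
        ≤ ∑ i, ‖x i‖ * ‖(M k *ᵥ x) i‖ := by
          rw [dotProduct]
          refine (norm_sum_le _ _).trans (le_of_eq (Finset.sum_congr rfl fun i _ => ?_))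
          simp [norm_mul]
      _ ≤ ∑ i, ‖x i‖ * (∑ j, C * ‖x j‖) := by
          refine Finset.sum_le_sum fun i _ => mul_le_mul_of_nonneg_left ?_ (norm_nonneg _)
          rw [mulVec, dotProduct]
          refine (norm_sum_le _ _).trans (Finset.sum_le_sum fun j _ => ?_)
          rw [norm_mul]
          exact mul_le_mul_of_nonneg_right (hbd k i j) (norm_nonneg _)
  · intro k
    exact (hpsd k).dotProduct_mulVec_nonneg x

end Aux

open Matrix Finset in
theorem psiMap_completely_positive {n : ℕ}
    {H : Type} [NormedAddCommGroup H] [InnerProductSpace ℂ H] [CompleteSpace H]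
    (h : Fin n → Fin n → H)
    (horth : ∀ v x y : Fin n, x ≠ y → ⟪h v x, h v y⟫_ℂ = 0)
    (hsum : ∀ v w : Fin n, ∑ x, h v x = ∑ x, h w x)
    (hnorm : ∀ v : Fin n, ‖∑ x, h v x‖ = 1)
    (hpos : ∀ v w x y : Fin n, 0 ≤ ⟪h v x, h w y⟫_ℂ)
    (glim : (ℕ → ℂ) →ₗ[ℂ] ℂ) (hglim : IsBanachLimit glim) :
    Matrix.PosSemidef (Matrix.of fun vx wy : Fin n × Fin n =>
      psiMap glim (fun x y v w => ⟪h v x, h w y⟫_ℂ)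
        (Matrix.single vx.1 wy.1 1) vx.2 wy.2) ∧
    (∀ A : Matrix (Fin n) (Fin n) ℂ, A.PosSemidef →
      (psiMap glim (fun x y v w => ⟪h v x, h w y⟫_ℂ) A).PosSemidef) := by
  classical
  set p : Fin n → Fin n → Fin n → Fin n → ℂ := fun x y v w => ⟪h v x, h w y⟫_ℂ with hp
  -- the single-step map preserves positive semidefiniteness
  have step_psd : ∀ {A : Matrix (Fin n) (Fin n) ℂ}, A.PosSemidef → (phiMap p A).PosSemidef := by
    intro A hA
    obtain ⟨B, rfl⟩ := auxPsdFactor hA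
    have key : phiMap p (Bᴴ * B)
        = ∑ j, Matrix.of fun x y => ⟪∑ a, B j a • h a x, ∑ b, B j b • h b y⟫_ℂ := by
      ext x y
      simp only [phiMap, hp, Matrix.of_apply, Matrix.sum_apply, Matrix.mul_apply,
        Matrix.conjTranspose_apply, inner_sum, sum_inner, inner_smul_left, inner_smul_right,
        Finset.mul_sum, Complex.star_def]
      rw [auxSumRot]
      refine Finset.sum_congr rfl fun j _ => ?_
      rw [Finset.sum_comm]
      exact Finset.sum_congr rfl fun v _ => Finset.sum_congr rfl fun w _ => by ring
    rw [key]
    exact auxSumPsd _ _ fun j _ => auxGramPosSemidef _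
  -- the "Choi step": applying phiMap entrywise to a PSD matrix over pairs stays PSD
  have choi_step : ∀ {G : Matrix (Fin n × Fin n) (Fin n × Fin n) ℂ}, G.PosSemidef →
      (Matrix.of fun vx wy : Fin n × Fin n =>
        ∑ a, ∑ b, p vx.2 wy.2 a b * G (vx.1, a) (wy.1, b)).PosSemidef := by
    intro G hG
    obtain ⟨B, rfl⟩ := auxPsdFactor hG
    have key : (Matrix.of fun vx wy : Fin n × Fin n =>
        ∑ a, ∑ b, p vx.2 wy.2 a b * (Bᴴ * B) (vx.1, a) (wy.1, b))
        = ∑ j : Fin n × Fin n, Matrix.of fun vx wy : Fin n × Fin n =>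
            ⟪∑ a, B j (vx.1, a) • h a vx.2, ∑ b, B j (wy.1, b) • h b wy.2⟫_ℂ := by
      ext vx wy
      simp only [hp, Matrix.of_apply, Matrix.sum_apply, Matrix.mul_apply,
        Matrix.conjTranspose_apply, inner_sum, sum_inner, inner_smul_left, inner_smul_right,
        Finset.mul_sum, Complex.star_def]
      rw [auxSumRot]
      refine Finset.sum_congr rfl fun j _ => ?_
      rw [Finset.sum_comm]
      exact Finset.sum_congr rfl fun a _ => Finset.sum_congr rfl fun b _ => by ring
    rw [key]
    exact auxSumPsd _ _ fun j _ => auxGramPosSemidef _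
  -- the Choi matrices of the iterates are PSD
  have choi_seq : ∀ k : ℕ, (Matrix.of fun vx wy : Fin n × Fin n =>
      ((phiMap p)^[k] (Matrix.single vx.1 wy.1 (1:ℂ))) vx.2 wy.2).PosSemidef := by
    intro k
    induction k with
    | zero =>
      have : (Matrix.of fun vx wy : Fin n × Fin n =>
          ((phiMap p)^[0] (Matrix.single vx.1 wy.1 (1:ℂ))) vx.2 wy.2)
          = Matrix.of fun vx wy : Fin n × Fin n =>
              ⟪(if vx.1 = vx.2 then (1:ℂ) else 0), (if wy.1 = wy.2 then (1:ℂ) else 0)⟫_ℂ := by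
        ext vx wy
        simp only [Function.iterate_zero, id_eq, Matrix.of_apply, Matrix.single,
          RCLike.inner_apply, Matrix.of_apply]
        by_cases h1 : vx.1 = vx.2 <;> by_cases h2 : wy.1 = wy.2 <;> simp [h1, h2]
      rw [this]
      exact auxGramPosSemidef (fun vx : Fin n × Fin n => (if vx.1 = vx.2 then (1:ℂ) else 0))
    | succ k ih =>
      have : (Matrix.of fun vx wy : Fin n × Fin n =>
          ((phiMap p)^[k+1] (Matrix.single vx.1 wy.1 (1:ℂ))) vx.2 wy.2)
          = Matrix.of fun vx wy : Fin n × Fin n =>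
              ∑ a, ∑ b, p vx.2 wy.2 a b *
                (Matrix.of fun va wb : Fin n × Fin n =>
                  ((phiMap p)^[k] (Matrix.single va.1 wb.1 (1:ℂ))) va.2 wb.2)
                  (vx.1, a) (wy.1, b) := by
        ext vx wy
        simp only [Matrix.of_apply]
        rw [Function.iterate_succ_apply']
        simp [phiMap]
      rw [this]
      exact choi_step ih
  -- ℓ¹-contraction bound for the iterates
  have habs_eq : ∀ z : ℂ, 0 ≤ z → ((‖z‖ : ℝ) : ℂ) = z := by
    intro z hz
    rw [Complex.le_def] at hz
    have hz' : z = ((z.re : ℝ) : ℂ) := Complex.ext rfl (by simpa using hz.2.symm)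
    rw [hz', Complex.norm_real, Real.norm_eq_abs, abs_of_nonneg (by simpa using hz.1)]
  have hone : ∀ a b : Fin n, ∑ x, ∑ y, ‖p x y a b‖ = 1 := by
    intro a b
    have h1 : (∑ x, ∑ y, p x y a b) = 1 := by
      simp only [hp]
      calc ∑ x, ∑ y, ⟪h a x, h b y⟫_ℂ = ∑ x, ⟪h a x, ∑ y, h b y⟫_ℂ := by
            exact Finset.sum_congr rfl fun x _ => (inner_sum _ _ _).symm
        _ = ⟪∑ x, h a x, ∑ y, h b y⟫_ℂ := (sum_inner _ _ _).symm
        _ = ⟪∑ x, h a x, ∑ y, h a y⟫_ℂ := by rw [hsum b a]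
        _ = ((‖∑ x, h a x‖ : ℝ) : ℂ)^2 := inner_self_eq_norm_sq_to_K _
        _ = 1 := by rw [hnorm a]; norm_num
    have : ((∑ x, ∑ y, ‖p x y a b‖ : ℝ) : ℂ) = 1 := by
      push_cast
      rw [← h1]
      exact Finset.sum_congr rfl fun x _ => Finset.sum_congr rfl fun y _ =>
        habs_eq _ (hpos a b x y)
    exact_mod_cast this
  have contract : ∀ M : Matrix (Fin n) (Fin n) ℂ,
      ∑ x, ∑ y, ‖phiMap p M x y‖ ≤ ∑ v, ∑ w, ‖M v w‖ := by
    intro M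
    calc ∑ x, ∑ y, ‖phiMap p M x y‖
        ≤ ∑ x, ∑ y, ∑ a, ∑ b, ‖p x y a b‖ * ‖M a b‖ := by
          refine Finset.sum_le_sum fun x _ => Finset.sum_le_sum fun y _ => ?_
          simp only [phiMap, Matrix.of_apply]
          refine (norm_sum_le _ _).trans (Finset.sum_le_sum fun a _ => ?_)
          refine (norm_sum_le _ _).trans (Finset.sum_le_sum fun b _ => ?_)
          rw [norm_mul]
      _ = ∑ a, ∑ b, (∑ x, ∑ y, ‖p x y a b‖) * ‖M a b‖ := by
          rw [auxSumSwap4]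
          simp only [Finset.sum_mul]
      _ = ∑ a, ∑ b, ‖M a b‖ := by
          exact Finset.sum_congr rfl fun a _ => Finset.sum_congr rfl fun b _ => by
            rw [hone a b, one_mul]
  have iter_bound : ∀ (A : Matrix (Fin n) (Fin n) ℂ) (k : ℕ) (x y : Fin n),
      ‖((phiMap p)^[k] A) x y‖ ≤ ∑ v, ∑ w, ‖A v w‖ := by
    intro A k
    have hsum_le : ∀ k, ∑ x, ∑ y, ‖((phiMap p)^[k] A) x y‖
        ≤ ∑ v, ∑ w, ‖A v w‖ := by
      intro k
      induction k with
      | zero => simp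
      | succ k ih =>
        rw [Function.iterate_succ_apply']
        exact (contract _).trans ih
    intro x y
    refine le_trans ?_ (hsum_le k)
    calc ‖((phiMap p)^[k] A) x y‖
        ≤ ∑ y', ‖((phiMap p)^[k] A) x y'‖ :=
          Finset.single_le_sum (fun _ _ => norm_nonneg _) (Finset.mem_univ y)
      _ ≤ ∑ x', ∑ y', ‖((phiMap p)^[k] A) x' y'‖ :=
          Finset.single_le_sum (f := fun x' => ∑ y', ‖((phiMap p)^[k] A) x' y'‖)
            (fun _ _ => Finset.sum_nonneg fun _ _ => norm_nonneg _) (Finset.mem_univ x)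
  constructor
  · -- Choi matrix of psiMap is PSD
    have hEbound : ∀ (v w : Fin n), ∑ a, ∑ b,
        ‖Matrix.single v w (1:ℂ) a b‖ ≤ 1 := by
      intro v w
      apply le_of_eq
      simp [Matrix.single, apply_ite (‖·‖), ite_and, Finset.sum_ite_eq]
    exact auxGlimPsd glim hglim
      (fun k => Matrix.of fun vx wy : Fin n × Fin n =>
        ((phiMap p)^[k] (Matrix.single vx.1 wy.1 (1:ℂ))) vx.2 wy.2)
      choi_seq 1
      (fun k vx wy => (iter_bound _ k _ _).trans (hEbound vx.1 wy.1))
  · -- psiMap maps PSD to PSD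
    intro A hA
    have hiter : ∀ k, ((phiMap p)^[k] A).PosSemidef := by
      intro k
      induction k with
      | zero => simpa using hA
      | succ k ih =>
        rw [Function.iterate_succ_apply']
        exact step_psd ih
    exact auxGlimPsd glim hglim (fun k => (phiMap p)^[k] A) hiter
      (∑ v, ∑ w, ‖A v w‖) (fun k i j => iter_bound A k i j)
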